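/- Let I ⊆ ℝ be an open interval, let γ, ν, Ĉ, D̂ be real constants, and let a, b, c, d : I → ℝ be differentiable functions such that for all X ∈ I and each r ∈ {a, b, c, d}: r(X)·Ĉ + D̂ = (ν/6)r(X)³ − (γ/12)r(X)⁴ and 3r(X)²ν − 2r(X)³γ − 6Ĉ ≠ 0; and such that for all X ∈ I, a(X) − c(X) ≠ 0, b(X) − d(X) ≠ 0, and ((a(X) − d(X))(b(X) − c(X)))/((a(X) − c(X))(b(X) − d(X))) ≥ 0. Define m : I → ℝ by m(X) = √( ((a(X) − d(X))(b(X) − c(X))) / ((a(X) − c(X))(b(X) − d(X))) ). Then m is constant on I. -/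

import Mathlib

/-- At a fixed point of the modulation equations, where the integration
constants `Ĉ, D̂` are constant, the elliptic modulus
`m = √((a-d)(b-c)/((a-c)(b-d)))` is constant on the interval. -/
theorem modulus_is_constant
    (I : Set ℝ) (hI : IsOpen I) (hI' : I.OrdConnected)
    (γ ν C D : ℝ) (a b c d : ℝ → ℝ)
    (ha : ∀ X ∈ I, DifferentiableAt ℝ a X)
    (hb : ∀ X ∈ I, DifferentiableAt ℝ b X)
    (hc : ∀ X ∈ I, DifferentiableAt ℝ c X)
    (hd : ∀ X ∈ I, DifferentiableAt ℝ d X)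
    (heq : ∀ X ∈ I, ∀ r ∈ ({a, b, c, d} : Set (ℝ → ℝ)),
      r X * C + D = (ν / 6) * (r X) ^ 3 - (γ / 12) * (r X) ^ 4)
    (hnd : ∀ X ∈ I, ∀ r ∈ ({a, b, c, d} : Set (ℝ → ℝ)),
      3 * (r X) ^ 2 * ν - 2 * (r X) ^ 3 * γ - 6 * C ≠ 0)
    (hac : ∀ X ∈ I, a X - c X ≠ 0)
    (hbd : ∀ X ∈ I, b X - d X ≠ 0)
    (hratio : ∀ X ∈ I,
      0 ≤ ((a X - d X) * (b X - c X)) / ((a X - c X) * (b X - d X)))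
    (m : ℝ → ℝ)
    (hm : ∀ X, m X = Real.sqrt
      (((a X - d X) * (b X - c X)) / ((a X - c X) * (b X - d X)))) :
    ∀ X ∈ I, ∀ Y ∈ I, m X = m Y := by
  have hconv : Convex ℝ I := convex_iff_ordConnected.mpr hI'
  have key : ∀ r : ℝ → ℝ, (∀ X ∈ I, DifferentiableAt ℝ r X) →
      (∀ X ∈ I, r X * C + D = (ν / 6) * (r X) ^ 3 - (γ / 12) * (r X) ^ 4) →
      (∀ X ∈ I, 3 * (r X) ^ 2 * ν - 2 * (r X) ^ 3 * γ - 6 * C ≠ 0) →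
      ∀ X ∈ I, ∀ Y ∈ I, r X = r Y := by
    intro r hr h1 h2
    have hderiv : ∀ X ∈ I, HasDerivAt r 0 X := by
      intro X hX
      have hd' := (hr X hX).hasDerivAt
      have hg : HasDerivAt
          (fun Y => r Y * C + D - ((ν / 6) * (r Y) ^ 3 - (γ / 12) * (r Y) ^ 4))
          (deriv r X * C - ((ν / 6) * (3 * r X ^ 2 * deriv r X)
            - (γ / 12) * (4 * r X ^ 3 * deriv r X))) X := by
        have h3 : HasDerivAt (fun Y => (r Y) ^ 3) (3 * r X ^ 2 * deriv r X) X := by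
          simpa using hd'.fun_pow 3
        have h4 : HasDerivAt (fun Y => (r Y) ^ 4) (4 * r X ^ 3 * deriv r X) X := by
          simpa using hd'.fun_pow 4
        exact ((hd'.mul_const C).add_const D).sub
          ((h3.const_mul (ν / 6)).sub (h4.const_mul (γ / 12)))
      have hzero : (fun Y => r Y * C + D - ((ν / 6) * (r Y) ^ 3 - (γ / 12) * (r Y) ^ 4))
          =ᶠ[nhds X] fun _ => (0 : ℝ) := by
        filter_upwards [hI.mem_nhds hX] with y hy
        have := h1 y hy
        linarith
      have hE : deriv r X * C - ((ν / 6) * (3 * r X ^ 2 * deriv r X)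
          - (γ / 12) * (4 * r X ^ 3 * deriv r X)) = 0 := by
        rw [← hg.deriv, hzero.deriv_eq]
        simp
      have hf : deriv r X * (3 * (r X) ^ 2 * ν - 2 * (r X) ^ 3 * γ - 6 * C) = 0 := by
        linear_combination (-6 : ℝ) * hE
      rcases mul_eq_zero.mp hf with h | h
      · exact h ▸ hd'
      · exact absurd h (h2 X hX)
    intro X hX Y hY
    refine hconv.is_const_of_fderivWithin_eq_zero
      (fun x hx => (hr x hx).differentiableWithinAt) (fun x hx => ?_) hX hY
    rw [fderivWithin_of_isOpen hI hx, (hderiv x hx).hasFDerivAt.fderiv]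
    ext t
    simp
  have hma := key a ha (fun X hX => heq X hX a (by simp))
    (fun X hX => hnd X hX a (by simp))
  have hmb := key b hb (fun X hX => heq X hX b (by simp))
    (fun X hX => hnd X hX b (by simp))
  have hmc := key c hc (fun X hX => heq X hX c (by simp))
    (fun X hX => hnd X hX c (by simp))
  have hmd := key d hd (fun X hX => heq X hX d (by simp))
    (fun X hX => hnd X hX d (by simp))
  intro X hX Y hY
  rw [hm X, hm Y, hma X hX Y hY, hmb X hX Y hY, hmc X hX Y hY, hmd X hX Y hY]
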